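/- Let G=(V,E) be an undirected unweighted graph with an s–t path p*, and let Ĝ=(V,Â) be its bidirected version with arc set Â = {(u,v),(v,u) : {u,v}∈E} and unit weights, where p* is regarded as a directed path using forward arcs. If Ê'⊆Â is a directed Force Path Cut solution for (Ĝ,p*) containing no arc (u,v) or (v,u) with {u,v}∈E_{p*}, then the undirected edge set E' = {{u,v} : (u,v)∈Ê'} is an undirected Force Path Cut solution for (G,p*). -/

import Mathlib

/-- `p` (a list of vertices) is a directed path from `s` to `t` in the directed graph
with arc set `A`: it starts at `s`, ends at `t`, consecutive vertices are joined by
arcs of `A`, and no vertex repeats.  Its length (number of arcs) is `p.length - 1`. -/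
def IsDiPath {V : Type*} (A : Set (V × V)) (s t : V) (p : List V) : Prop :=
  p.head? = some s ∧ p.getLast? = some t ∧
    p.Chain' (fun u v => (u, v) ∈ A) ∧ p.Nodup

/-- `E'` is a directed Force Path Cut solution for the directed graph with arc set `A`
(unit arc weights), terminals `s, t` and target directed path `p` (given by its vertex
list): `E'` consists of arcs of `A`, avoids the arcs of `p`, and after removing `E'`
the path `p` is strictly shorter than every other directed `s`–`t` path. -/
def DiFPCSol {V : Type*} (A : Set (V × V)) (s t : V) (p : List V)
    (E' : Set (V × V)) : Prop :=
  E' ⊆ A ∧ (∀ a ∈ p.zip p.tail, a ∉ E') ∧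
    ∀ q : List V, IsDiPath (A \ E') s t q → q ≠ p → p.length < q.length

/-- `E'` is a Force Path Cut solution for the undirected graph `G` with unit edge
weights and target path `p`. -/
def FPCSol {V : Type*} (G : SimpleGraph V) {s t : V} (p : G.Walk s t)
    (E' : Set (Sym2 V)) : Prop :=
  E' ⊆ G.edgeSet ∧ (∀ e ∈ p.edges, e ∉ E') ∧
    ∀ q : (G.deleteEdges E').Walk s t, q.IsPath →
      q.mapLe (SimpleGraph.deleteEdges_le E') ≠ p → p.length < q.length

/-- The arc set of the bidirected version of the undirected graph `G`. -/
def biArcs {V : Type*} (G : SimpleGraph V) : Set (V × V) :=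
  {a : V × V | G.Adj a.1 a.2}

/-- If `Ê'` is a directed Force Path Cut solution for the bidirected
version of `G` with target directed path `p*` (the support list of the undirected
target path), containing no arc `(u,v)` or `(v,u)` with `{u,v}` an edge of `p*`, then
`E' = {{u,v} : (u,v) ∈ Ê'}` is an undirected Force Path Cut solution for `(G, p*)`. -/
theorem walk_eq_of_support_eq {V : Type*} {G : SimpleGraph V} {s t : V}
    (w : G.Walk s t) : ∀ (w' : G.Walk s t), w.support = w'.support → w = w' := by
  induction w with
  | nil =>
    intro w' h
    cases w' with
    | nil => rfl
    | cons h' p' =>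
      have := congrArg List.length h
      simp [SimpleGraph.Walk.length_support] at this
  | cons h p ih =>
    intro w' hsup
    cases w' with
    | nil => simp [SimpleGraph.Walk.support_cons] at hsup
    | cons h' p' =>
      rw [SimpleGraph.Walk.support_cons, SimpleGraph.Walk.support_cons,
        List.cons.injEq] at hsup
      obtain ⟨-, hsup⟩ := hsup
      have hv := congrArg List.head? hsup
      rw [p.support_eq_cons, p'.support_eq_cons] at hv
      simp only [List.head?_cons, Option.some.injEq] at hv
      subst hv
      rw [ih p' hsup]

theorem stmt7 {V : Type*} (G : SimpleGraph V) (s t : V) (hst : s ≠ t)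
    (pstar : G.Walk s t) (hpstar : pstar.IsPath)
    (Ehat : Set (V × V))
    (havoid : ∀ u v : V, s(u, v) ∈ pstar.edges → (u, v) ∉ Ehat ∧ (v, u) ∉ Ehat)
    (hsol : DiFPCSol (biArcs G) s t pstar.support Ehat) :
    FPCSol G pstar ((fun a : V × V => s(a.1, a.2)) '' Ehat) := by
  obtain ⟨hsub, -, hmin⟩ := hsol
  refine ⟨?_, ?_, ?_⟩
  · rintro e ⟨⟨u, v⟩, huv, rfl⟩
    exact hsub huv
  · rintro e he ⟨⟨u, v⟩, huv, rfl⟩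
    exact (havoid u v he).1 huv
  · intro q hq hne
    have hchain : q.support.Chain' (fun u v => (u, v) ∈ biArcs G \ Ehat) := by
      refine (q.isChain_adj_support).imp ?_
      intro u v huv
      rw [SimpleGraph.deleteEdges_adj] at huv
      exact ⟨huv.1, fun hmem => huv.2 ⟨(u, v), hmem, rfl⟩⟩
    have hdi : IsDiPath (biArcs G \ Ehat) s t q.support := by
      refine ⟨?_, ?_, hchain, hq.support_nodup⟩
      · rw [q.support_eq_cons]; rfl
      · rw [List.getLast?_eq_getLast (q.support_ne_nil), q.getLast_support]
    have hne' : q.support ≠ pstar.support := by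
      intro hsup
      apply hne
      apply walk_eq_of_support_eq
      rw [SimpleGraph.Walk.support_map]
      convert hsup using 1
      exact List.map_congr_left (fun _ _ => rfl) |>.trans (List.map_id _)
    have hlt := hmin q.support hdi hne'
    simpa [SimpleGraph.Walk.length_support] using hlt
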